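/- Let f = 𝟏_{[x₁,x₂]×[y₁,y₂]} be the indicator of a rectangle in ℝ² with side lengths a = x₂−x₁ > 0 and b = y₂−y₁ > 0. Let p ∈ [1,∞) and s ∈ (0, 1/p). Then the Besov–Nikolskii norm ‖f‖'_{B^s_{p,∞}} := ‖f‖_{L^p} + sup_{h≠0} ‖f − τ_h f‖_{L^p}/|h|^s satisfies ‖f‖'_{B^s_{p,∞}} ≤ (ab)^{1/p}(1 + 4^{1/p} min{a,b}^{−s}). In particular, if a ≤ min{b,1}, then ‖f‖'_{B^s_{p,∞}} ≤ 5 a^{1/p−s} b^{1/p}. -/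

import Mathlib

open MeasureTheory Set

section Aux

lemma rect_vol (A B : Set ℝ) (hA : MeasurableSet A) (hB : MeasurableSet B) :
    volume {y : EuclideanSpace ℝ (Fin 2) | y 0 ∈ A ∧ y 1 ∈ B} = volume A * volume B := by
  have e := EuclideanSpace.volume_preserving_symm_measurableEquiv_toLp (Fin 2)
  have hS : {y : Fin 2 → ℝ | y 0 ∈ A ∧ y 1 ∈ B} = Set.pi Set.univ ![A, B] := by
    ext y
    simp [Set.mem_pi, Fin.forall_fin_two]
  have hmeas : MeasurableSet {y : Fin 2 → ℝ | y 0 ∈ A ∧ y 1 ∈ B} := by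
    rw [hS]
    exact MeasurableSet.univ_pi (by simp [Fin.forall_fin_two, hA, hB])
  have : {y : EuclideanSpace ℝ (Fin 2) | y 0 ∈ A ∧ y 1 ∈ B}
      = (MeasurableEquiv.toLp 2 (Fin 2 → ℝ)).symm ⁻¹' {y : Fin 2 → ℝ | y 0 ∈ A ∧ y 1 ∈ B} := rfl
  rw [this, e.measure_preimage hmeas.nullMeasurableSet, hS, volume_pi_pi]
  simp [Fin.prod_univ_two]

lemma rect_meas (A B : Set ℝ) (hA : MeasurableSet A) (hB : MeasurableSet B) :
    MeasurableSet {y : EuclideanSpace ℝ (Fin 2) | y 0 ∈ A ∧ y 1 ∈ B} := by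
  have hS : {y : Fin 2 → ℝ | y 0 ∈ A ∧ y 1 ∈ B} = Set.pi Set.univ ![A, B] := by
    ext y
    simp [Set.mem_pi, Fin.forall_fin_two]
  have hmeas : MeasurableSet {y : Fin 2 → ℝ | y 0 ∈ A ∧ y 1 ∈ B} := by
    rw [hS]
    exact MeasurableSet.univ_pi (by simp [Fin.forall_fin_two, hA, hB])
  exact (MeasurableEquiv.toLp 2 (Fin 2 → ℝ)).symm.measurable hmeas

lemma escape_1d (x₁ x₂ c : ℝ) :
    volume {t : ℝ | t ∈ Icc x₁ x₂ ∧ t + c ∉ Icc x₁ x₂} ≤ ENNReal.ofReal |c| := by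
  have hsub : {t : ℝ | t ∈ Icc x₁ x₂ ∧ t + c ∉ Icc x₁ x₂} ⊆ Ioc (x₂ - c) x₂ ∪ Ico x₁ (x₁ - c) := by
    rintro t ⟨⟨h1, h2⟩, h3⟩
    rw [Set.mem_Icc, not_and_or, not_le, not_le] at h3
    rcases h3 with h3 | h3
    · right; exact ⟨h1, by linarith⟩
    · left; exact ⟨by linarith, h2⟩
  calc volume {t : ℝ | t ∈ Icc x₁ x₂ ∧ t + c ∉ Icc x₁ x₂}
      ≤ volume (Ioc (x₂ - c) x₂) + volume (Ico x₁ (x₁ - c)) :=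
        (measure_mono hsub).trans (measure_union_le _ _)
    _ ≤ ENNReal.ofReal |c| := by
        rw [Real.volume_Ioc, Real.volume_Ico]
        rcases le_or_gt 0 c with hc | hc
        · rw [abs_of_nonneg hc]
          rw [show x₂ - (x₂ - c) = c by ring,
            ENNReal.ofReal_eq_zero.2 (by linarith : x₁ - c - x₁ ≤ 0), add_zero]
        · rw [abs_of_neg hc]
          have : x₂ - (x₂ - c) = c := by ring
          simp [this, ENNReal.ofReal_eq_zero.2 hc.le, show x₁ - c - x₁ = -c by ring]

lemma escape_1d_meas (x₁ x₂ c : ℝ) :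
    MeasurableSet {t : ℝ | t ∈ Icc x₁ x₂ ∧ t + c ∉ Icc x₁ x₂} := by
  have : {t : ℝ | t ∈ Icc x₁ x₂ ∧ t + c ∉ Icc x₁ x₂}
      = Icc x₁ x₂ ∩ (fun t : ℝ => t + c) ⁻¹' (Icc x₁ x₂)ᶜ := rfl
  rw [this]
  exact measurableSet_Icc.inter ((measurable_add_const c) measurableSet_Icc.compl)

lemma coord_le_norm (h : EuclideanSpace ℝ (Fin 2)) (i : Fin 2) : |h i| ≤ ‖h‖ := by
  rw [EuclideanSpace.norm_eq h,
    show |h i| = Real.sqrt (|h i| ^ 2) by rw [Real.sqrt_sq_eq_abs, abs_abs]]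
  apply Real.sqrt_le_sqrt
  exact Finset.single_le_sum (fun j _ => sq_nonneg ‖h j‖) (Finset.mem_univ i)

lemma diff_bound (x₁ x₂ y₁ y₂ : ℝ) (hx : x₁ ≤ x₂) (hy : y₁ ≤ y₂) (h : EuclideanSpace ℝ (Fin 2)) :
    volume {y : EuclideanSpace ℝ (Fin 2) |
        (y 0 ∈ Icc x₁ x₂ ∧ y 1 ∈ Icc y₁ y₂) ∧ ¬((y + h) 0 ∈ Icc x₁ x₂ ∧ (y + h) 1 ∈ Icc y₁ y₂)}
      ≤ ENNReal.ofReal (|h 0| * (y₂ - y₁) + (x₂ - x₁) * |h 1|) := by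
  set A' : Set ℝ := {t : ℝ | t ∈ Icc x₁ x₂ ∧ t + h 0 ∉ Icc x₁ x₂} with hA'
  set B' : Set ℝ := {t : ℝ | t ∈ Icc y₁ y₂ ∧ t + h 1 ∉ Icc y₁ y₂} with hB'
  have hsub : {y : EuclideanSpace ℝ (Fin 2) |
        (y 0 ∈ Icc x₁ x₂ ∧ y 1 ∈ Icc y₁ y₂) ∧ ¬((y + h) 0 ∈ Icc x₁ x₂ ∧ (y + h) 1 ∈ Icc y₁ y₂)}
      ⊆ {y : EuclideanSpace ℝ (Fin 2) | y 0 ∈ A' ∧ y 1 ∈ Icc y₁ y₂}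
        ∪ {y : EuclideanSpace ℝ (Fin 2) | y 0 ∈ Icc x₁ x₂ ∧ y 1 ∈ B'} := by
    rintro y ⟨⟨h1, h2⟩, h3⟩
    rw [not_and_or] at h3
    have e0 : (y + h) 0 = y 0 + h 0 := rfl
    have e1 : (y + h) 1 = y 1 + h 1 := rfl
    rcases h3 with h3 | h3
    · left; exact ⟨⟨h1, by rwa [e0] at h3⟩, h2⟩
    · right; exact ⟨h1, h2, by rwa [e1] at h3⟩
  calc volume {y : EuclideanSpace ℝ (Fin 2) |
        (y 0 ∈ Icc x₁ x₂ ∧ y 1 ∈ Icc y₁ y₂) ∧ ¬((y + h) 0 ∈ Icc x₁ x₂ ∧ (y + h) 1 ∈ Icc y₁ y₂)}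
      ≤ volume {y : EuclideanSpace ℝ (Fin 2) | y 0 ∈ A' ∧ y 1 ∈ Icc y₁ y₂}
        + volume {y : EuclideanSpace ℝ (Fin 2) | y 0 ∈ Icc x₁ x₂ ∧ y 1 ∈ B'} :=
        (measure_mono hsub).trans (measure_union_le _ _)
    _ ≤ ENNReal.ofReal (|h 0| * (y₂ - y₁)) + ENNReal.ofReal ((x₂ - x₁) * |h 1|) := by
        rw [rect_vol A' _ (escape_1d_meas _ _ _) measurableSet_Icc,
          rect_vol _ B' measurableSet_Icc (escape_1d_meas _ _ _),
          Real.volume_Icc, Real.volume_Icc]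
        gcongr
        · rw [ENNReal.ofReal_mul (abs_nonneg _)]
          exact mul_le_mul_left (escape_1d _ _ _) _
        · rw [ENNReal.ofReal_mul (by linarith : (0:ℝ) ≤ x₂ - x₁)]
          exact mul_le_mul_right (escape_1d _ _ _) _
    _ ≤ ENNReal.ofReal (|h 0| * (y₂ - y₁) + (x₂ - x₁) * |h 1|) := by
        rw [← ENNReal.ofReal_add (mul_nonneg (abs_nonneg _) (by linarith)) (mul_nonneg (by linarith) (abs_nonneg _))]
        
end Aux

lemma key_bound (x₁ x₂ y₁ y₂ a b p s : ℝ)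
    (ha : a = x₂ - x₁) (hb : b = y₂ - y₁) (ha0 : 0 < a) (hb0 : 0 < b)
    (hp : 1 ≤ p) (hs0 : 0 < s) (hsp : s < 1 / p)
    (h : EuclideanSpace ℝ (Fin 2)) (hh : h ≠ 0) :
    (eLpNorm (fun y =>
        Set.indicator {y : EuclideanSpace ℝ (Fin 2) | y 0 ∈ Set.Icc x₁ x₂ ∧ y 1 ∈ Set.Icc y₁ y₂}
          (fun _ => (1 : ℝ)) y -
        Set.indicator {y : EuclideanSpace ℝ (Fin 2) | y 0 ∈ Set.Icc x₁ x₂ ∧ y 1 ∈ Set.Icc y₁ y₂}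
          (fun _ => (1 : ℝ)) (y + h)) (ENNReal.ofReal p) volume).toReal / ‖h‖ ^ s
      ≤ (a * b) ^ (1 / p) * ((4 : ℝ) ^ (1 / p) * (min a b) ^ (-s)) := by
  have hx : x₁ ≤ x₂ := by linarith
  have hy : y₁ ≤ y₂ := by linarith
  set S : Set (EuclideanSpace ℝ (Fin 2)) :=
    {y | y 0 ∈ Set.Icc x₁ x₂ ∧ y 1 ∈ Set.Icc y₁ y₂} with hSdef
  set T : Set (EuclideanSpace ℝ (Fin 2)) :=
    (S \ ((fun y => y + h) ⁻¹' S)) ∪ (((fun y => y + h) ⁻¹' S) \ S) with hTdef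
  have hSm : MeasurableSet S := rect_meas _ _ measurableSet_Icc measurableSet_Icc
  have hTm : MeasurableSet T :=
    (hSm.diff ((measurable_add_const h) hSm)).union (((measurable_add_const h) hSm).diff hSm)
  -- the eLpNorm of the difference equals the eLpNorm of the indicator of T
  have hnorm : ∀ y, ‖S.indicator (fun _ => (1:ℝ)) y - S.indicator (fun _ => (1:ℝ)) (y + h)‖
      = ‖T.indicator (fun _ => (1:ℝ)) y‖ := by
    intro y
    by_cases hy1 : y ∈ S <;> by_cases hy2 : y + h ∈ S <;>
      simp [hTdef, Set.indicator_apply, hy1, hy2, Set.mem_union, Set.mem_diff, Set.mem_preimage]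
  have hq0 : (ENNReal.ofReal p) ≠ 0 := by simp only [ne_eq, ENNReal.ofReal_eq_zero]; linarith
  have hqt : (ENNReal.ofReal p) ≠ ⊤ := ENNReal.ofReal_ne_top
  have heq : eLpNorm (fun y => S.indicator (fun _ => (1:ℝ)) y
        - S.indicator (fun _ => (1:ℝ)) (y + h)) (ENNReal.ofReal p) volume
      = volume T ^ (1 / p) := by
    rw [eLpNorm_congr_norm_ae (Filter.Eventually.of_forall hnorm),
      eLpNorm_indicator_const hTm hq0 hqt, ENNReal.toReal_ofReal (by linarith)]
    simp
  -- volume bounds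
  have hvolS : volume S = ENNReal.ofReal (a * b) := by
    rw [hSdef, rect_vol _ _ measurableSet_Icc measurableSet_Icc, Real.volume_Icc,
      Real.volume_Icc, ← ENNReal.ofReal_mul (by linarith), ← ha, ← hb]
  have hT1 : volume T ≤ ENNReal.ofReal (2 * (a * b)) := by
    have hsub : T ⊆ S ∪ ((fun y => y + h) ⁻¹' S) := by
      rw [hTdef]; exact Set.union_subset_union Set.diff_subset Set.diff_subset
    calc volume T ≤ volume S + volume ((fun y => y + h) ⁻¹' S) :=
          (measure_mono hsub).trans (measure_union_le _ _)
      _ = ENNReal.ofReal (a * b) + ENNReal.ofReal (a * b) := by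
          rw [measure_preimage_add_right, hvolS]
      _ = ENNReal.ofReal (2 * (a * b)) := by
          rw [← ENNReal.ofReal_add (by positivity) (by positivity)]; ring_nf
  have hT2 : volume T ≤ ENNReal.ofReal (2 * ((a + b) * ‖h‖)) := by
    have h1 : volume (S \ ((fun y => y + h) ⁻¹' S))
        ≤ ENNReal.ofReal (|h 0| * b + a * |h 1|) := by
      have : S \ ((fun y => y + h) ⁻¹' S) = {y : EuclideanSpace ℝ (Fin 2) |
          (y 0 ∈ Set.Icc x₁ x₂ ∧ y 1 ∈ Set.Icc y₁ y₂)
          ∧ ¬((y + h) 0 ∈ Set.Icc x₁ x₂ ∧ (y + h) 1 ∈ Set.Icc y₁ y₂)} := rfl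
      rw [this, ha, hb]
      exact diff_bound x₁ x₂ y₁ y₂ hx hy h
    have h2 : volume (((fun y => y + h) ⁻¹' S) \ S)
        ≤ ENNReal.ofReal (|h 0| * b + a * |h 1|) := by
      have hset : ((fun y => y + h) ⁻¹' S) \ S
          = (fun y => y + h) ⁻¹' {z : EuclideanSpace ℝ (Fin 2) |
              (z 0 ∈ Set.Icc x₁ x₂ ∧ z 1 ∈ Set.Icc y₁ y₂)
              ∧ ¬((z + (-h)) 0 ∈ Set.Icc x₁ x₂ ∧ (z + (-h)) 1 ∈ Set.Icc y₁ y₂)} := by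
        ext z
        simp only [Set.mem_diff, Set.mem_preimage, Set.mem_setOf_eq, add_neg_cancel_right]
        exact Iff.rfl
      rw [hset, measure_preimage_add_right]
      have := diff_bound x₁ x₂ y₁ y₂ hx hy (-h)
      have habs0 : |(-h) 0| = |h 0| := by
        show |(-(h 0))| = |h 0|; exact abs_neg _
      have habs1 : |(-h) 1| = |h 1| := by
        show |(-(h 1))| = |h 1|; exact abs_neg _
      rw [habs0, habs1, ← ha, ← hb] at this
      exact this
    have hc0 : |h 0| ≤ ‖h‖ := coord_le_norm h 0
    have hc1 : |h 1| ≤ ‖h‖ := coord_le_norm h 1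
    have hnn : (0:ℝ) ≤ ‖h‖ := norm_nonneg h
    calc volume T ≤ volume (S \ ((fun y => y + h) ⁻¹' S))
          + volume (((fun y => y + h) ⁻¹' S) \ S) := measure_union_le _ _
      _ ≤ ENNReal.ofReal (|h 0| * b + a * |h 1|) + ENNReal.ofReal (|h 0| * b + a * |h 1|) :=
          add_le_add h1 h2
      _ = ENNReal.ofReal (2 * (|h 0| * b + a * |h 1|)) := by
          rw [← ENNReal.ofReal_add (by positivity) (by positivity)]; ring_nf
      _ ≤ ENNReal.ofReal (2 * ((a + b) * ‖h‖)) := by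
          apply ENNReal.ofReal_le_ofReal
          nlinarith [mul_le_mul_of_nonneg_right hc0 hb0.le,
            mul_le_mul_of_nonneg_left hc1 ha0.le]
  -- pass to real numbers
  set X : ℝ := (volume T).toReal with hXdef
  have hX0 : 0 ≤ X := ENNReal.toReal_nonneg
  have hX1 : X ≤ 2 * (a * b) := ENNReal.toReal_le_of_le_ofReal (by positivity) hT1
  have hX2 : X ≤ 2 * ((a + b) * ‖h‖) := ENNReal.toReal_le_of_le_ofReal (by positivity) hT2
  have htoReal : (eLpNorm (fun y => S.indicator (fun _ => (1:ℝ)) y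
        - S.indicator (fun _ => (1:ℝ)) (y + h)) (ENNReal.ofReal p) volume).toReal
      = X ^ (1 / p) := by
    rw [heq, hXdef, ENNReal.toReal_rpow]
  rw [htoReal]
  -- real arithmetic
  have hp0 : (0:ℝ) < p := by linarith
  have h1p0 : (0:ℝ) < 1 / p := by positivity
  have hr0 : (0:ℝ) < ‖h‖ := norm_pos_iff.mpr hh
  set r : ℝ := ‖h‖ with hrdef
  set m : ℝ := min a b with hmdef
  have hm0 : (0:ℝ) < m := lt_min ha0 hb0
  have hrs0 : (0:ℝ) < r ^ s := Real.rpow_pos_of_pos hr0 s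
  rw [div_le_iff₀ hrs0]
  have hab0 : (0:ℝ) < a * b := by positivity
  rcases le_or_gt m r with hmr | hrm
  · -- large h : use X ≤ 2ab ≤ 4ab
    have hX4 : X ≤ 4 * (a * b) := by linarith
    have step1 : X ^ (1 / p) ≤ (4 * (a * b)) ^ (1 / p) :=
      Real.rpow_le_rpow hX0 hX4 h1p0.le
    have step2 : (4 * (a * b)) ^ (1 / p) = 4 ^ (1 / p) * (a * b) ^ (1 / p) :=
      Real.mul_rpow (by norm_num) hab0.le
    have hmm : m ^ (-s) * m ^ s = 1 := by
      rw [← Real.rpow_add hm0]; simp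
    have hms : m ^ s ≤ r ^ s := Real.rpow_le_rpow hm0.le hmr hs0.le
    have hpos : (0:ℝ) < (a * b) ^ (1 / p) * (4 ^ (1 / p) * m ^ (-s)) := by
      have := Real.rpow_pos_of_pos hab0 (1/p)
      have := Real.rpow_pos_of_pos (by norm_num : (0:ℝ) < 4) (1/p)
      have := Real.rpow_pos_of_pos hm0 (-s)
      positivity
    calc X ^ (1 / p) ≤ 4 ^ (1 / p) * (a * b) ^ (1 / p) := step1.trans_eq step2
      _ = (a * b) ^ (1 / p) * (4 ^ (1 / p) * m ^ (-s)) * m ^ s := by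
          rw [show (a * b) ^ (1 / p) * (4 ^ (1/p) * m ^ (-s)) * m ^ s
            = 4 ^ (1/p) * (a * b) ^ (1/p) * (m ^ (-s) * m ^ s) by ring, hmm, mul_one]
      _ ≤ (a * b) ^ (1 / p) * (4 ^ (1 / p) * m ^ (-s)) * r ^ s :=
          mul_le_mul_of_nonneg_left hms hpos.le
  · -- small h : use X ≤ 2(a+b) r ≤ 4ab (r/m)
    have hmab : m * (a + b) ≤ 2 * (a * b) := by
      rcases min_le_iff.mp (le_refl m) with _ | _ <;>
      nlinarith [min_le_left a b, min_le_right a b]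
    have hX4 : X ≤ 4 * (a * b) * (r / m) := by
      rw [mul_div_assoc']
      rw [le_div_iff₀ hm0]
      nlinarith [mul_le_mul_of_nonneg_right hmab hr0.le]
    have hrm1 : r / m ≤ 1 := (div_le_one hm0).mpr hrm.le
    have hrm0 : 0 < r / m := by positivity
    have step1 : X ^ (1 / p) ≤ (4 * (a * b)) ^ (1 / p) * (r / m) ^ (1 / p) := by
      rw [← Real.mul_rpow (by positivity) hrm0.le]
      exact Real.rpow_le_rpow hX0 hX4 h1p0.le
    have step2 : (r / m) ^ (1 / p) ≤ (r / m) ^ s :=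
      Real.rpow_le_rpow_of_exponent_ge hrm0 hrm1 hsp.le
    have step3 : (r / m) ^ s = r ^ s * m ^ (-s) := by
      rw [Real.div_rpow hr0.le hm0.le, Real.rpow_neg hm0.le, div_eq_mul_inv]
    calc X ^ (1 / p) ≤ (4 * (a * b)) ^ (1 / p) * (r / m) ^ (1 / p) := step1
      _ ≤ (4 * (a * b)) ^ (1 / p) * (r / m) ^ s :=
          mul_le_mul_of_nonneg_left step2 (Real.rpow_pos_of_pos (by positivity) _).le
      _ = (a * b) ^ (1 / p) * (4 ^ (1 / p) * m ^ (-s)) * r ^ s := by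
          rw [Real.mul_rpow (by norm_num) hab0.le, step3]; ring


/-- The Besov–Nikolskii norm `‖f‖'_{B^s_{p,∞}} = ‖f‖_{L^p} + sup_{h≠0} ‖f − τ_h f‖_{L^p}/|h|^s`
on functions on `ℝ²`. -/
noncomputable def besovNorm' (p s : ℝ) (f : EuclideanSpace ℝ (Fin 2) → ℝ) : ℝ :=
  (eLpNorm f (ENNReal.ofReal p) volume).toReal +
    ⨆ h : {h : EuclideanSpace ℝ (Fin 2) // h ≠ 0},
      (eLpNorm (fun y => f y - f (y + h.val)) (ENNReal.ofReal p) volume).toReal / ‖h.val‖ ^ s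

/-- For the indicator `f` of a rectangle with sides `a, b > 0`,
`p ∈ [1,∞)` and `s ∈ (0, 1/p)`:
`‖f‖'_{B^s_{p,∞}} ≤ (ab)^{1/p}(1 + 4^{1/p} (min a b)^{−s})`, and if `a ≤ min b 1` then
`‖f‖'_{B^s_{p,∞}} ≤ 5 a^{1/p−s} b^{1/p}`. -/
theorem stmt_2 (x₁ x₂ y₁ y₂ a b p s : ℝ)
    (ha : a = x₂ - x₁) (hb : b = y₂ - y₁) (ha0 : 0 < a) (hb0 : 0 < b)
    (hp : 1 ≤ p) (hs0 : 0 < s) (hsp : s < 1 / p) :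
    besovNorm' p s
        (Set.indicator {y | y 0 ∈ Set.Icc x₁ x₂ ∧ y 1 ∈ Set.Icc y₁ y₂} (fun _ => (1 : ℝ)))
      ≤ (a * b) ^ (1 / p) * (1 + (4 : ℝ) ^ (1 / p) * (min a b) ^ (-s))
    ∧ (a ≤ min b 1 →
      besovNorm' p s
          (Set.indicator {y | y 0 ∈ Set.Icc x₁ x₂ ∧ y 1 ∈ Set.Icc y₁ y₂} (fun _ => (1 : ℝ)))
        ≤ 5 * a ^ (1 / p - s) * b ^ (1 / p)) := by
  have hp0 : (0:ℝ) < p := by linarith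
  have h1p0 : (0:ℝ) < 1 / p := by positivity
  have hab0 : (0:ℝ) < a * b := by positivity
  have hm0 : (0:ℝ) < min a b := lt_min ha0 hb0
  have hq0 : (ENNReal.ofReal p) ≠ 0 := by simp only [ne_eq, ENNReal.ofReal_eq_zero]; linarith
  have hqt : (ENNReal.ofReal p) ≠ ⊤ := ENNReal.ofReal_ne_top
  have hSm : MeasurableSet {y : EuclideanSpace ℝ (Fin 2) |
      y 0 ∈ Set.Icc x₁ x₂ ∧ y 1 ∈ Set.Icc y₁ y₂} :=
    rect_meas _ _ measurableSet_Icc measurableSet_Icc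
  have hvolS : volume {y : EuclideanSpace ℝ (Fin 2) |
      y 0 ∈ Set.Icc x₁ x₂ ∧ y 1 ∈ Set.Icc y₁ y₂} = ENNReal.ofReal (a * b) := by
    rw [rect_vol _ _ measurableSet_Icc measurableSet_Icc, Real.volume_Icc,
      Real.volume_Icc, ← ENNReal.ofReal_mul (by linarith), ← ha, ← hb]
  have hLp : (eLpNorm (Set.indicator {y : EuclideanSpace ℝ (Fin 2) |
        y 0 ∈ Set.Icc x₁ x₂ ∧ y 1 ∈ Set.Icc y₁ y₂} (fun _ => (1 : ℝ)))
        (ENNReal.ofReal p) volume).toReal = (a * b) ^ (1 / p) := by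
    rw [eLpNorm_indicator_const hSm hq0 hqt, ENNReal.toReal_ofReal (by linarith), hvolS]
    simp only [nnnorm_one, enorm_one, ENNReal.coe_one, one_mul]
    rw [← ENNReal.toReal_rpow, ENNReal.toReal_ofReal hab0.le]
  have hcpos : (0:ℝ) ≤ (a * b) ^ (1 / p) * ((4 : ℝ) ^ (1 / p) * (min a b) ^ (-s)) := by
    positivity
  have hsup : (⨆ h : {h : EuclideanSpace ℝ (Fin 2) // h ≠ 0},
        (eLpNorm (fun y => Set.indicator {y : EuclideanSpace ℝ (Fin 2) |
            y 0 ∈ Set.Icc x₁ x₂ ∧ y 1 ∈ Set.Icc y₁ y₂} (fun _ => (1 : ℝ)) y -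
          Set.indicator {y : EuclideanSpace ℝ (Fin 2) |
            y 0 ∈ Set.Icc x₁ x₂ ∧ y 1 ∈ Set.Icc y₁ y₂} (fun _ => (1 : ℝ)) (y + h.val))
          (ENNReal.ofReal p) volume).toReal / ‖h.val‖ ^ s)
      ≤ (a * b) ^ (1 / p) * ((4 : ℝ) ^ (1 / p) * (min a b) ^ (-s)) :=
    Real.iSup_le (fun h =>
      key_bound x₁ x₂ y₁ y₂ a b p s ha hb ha0 hb0 hp hs0 hsp h.val h.property) hcpos
  have part1 : besovNorm' p s
      (Set.indicator {y : EuclideanSpace ℝ (Fin 2) |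
        y 0 ∈ Set.Icc x₁ x₂ ∧ y 1 ∈ Set.Icc y₁ y₂} (fun _ => (1 : ℝ)))
      ≤ (a * b) ^ (1 / p) * (1 + (4 : ℝ) ^ (1 / p) * (min a b) ^ (-s)) := by
    unfold besovNorm'
    rw [hLp, mul_add, mul_one]
    exact add_le_add le_rfl hsup
  refine ⟨part1, fun habm => part1.trans ?_⟩
  have hab' : a ≤ b := habm.trans (min_le_left _ _)
  have ha1 : a ≤ 1 := habm.trans (min_le_right _ _)
  rw [min_eq_left hab']
  rw [Real.mul_rpow ha0.le hb0.le]
  have h1p1 : 1 / p ≤ 1 := by rw [div_le_one hp0]; exact hp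
  have h4 : (4:ℝ) ^ (1 / p) ≤ 4 := by
    calc (4:ℝ) ^ (1 / p) ≤ (4:ℝ) ^ (1:ℝ) :=
          Real.rpow_le_rpow_of_exponent_le (by norm_num) h1p1
      _ = 4 := Real.rpow_one 4
  have hApow : a ^ (1 / p) * a ^ (-s) = a ^ (1 / p - s) := by
    rw [← Real.rpow_add ha0]; ring_nf
  have hA : a ^ (1 / p) ≤ a ^ (1 / p - s) :=
    Real.rpow_le_rpow_of_exponent_ge ha0 ha1 (by linarith)
  have hB0 : (0:ℝ) ≤ b ^ (1 / p) := Real.rpow_nonneg hb0.le _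
  have hA0 : (0:ℝ) < a ^ (1 / p - s) := Real.rpow_pos_of_pos ha0 _
  have hc0 : (0:ℝ) < (4:ℝ) ^ (1 / p) := Real.rpow_pos_of_pos (by norm_num) _
  calc a ^ (1 / p) * b ^ (1 / p) * (1 + (4:ℝ) ^ (1 / p) * a ^ (-s))
      = a ^ (1 / p) * b ^ (1 / p)
        + (4:ℝ) ^ (1 / p) * (a ^ (1 / p) * a ^ (-s)) * b ^ (1 / p) := by ring
    _ = a ^ (1 / p) * b ^ (1 / p) + (4:ℝ) ^ (1 / p) * a ^ (1 / p - s) * b ^ (1 / p) := by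
        rw [hApow]
    _ ≤ a ^ (1 / p - s) * b ^ (1 / p) + 4 * a ^ (1 / p - s) * b ^ (1 / p) :=
        add_le_add (mul_le_mul_of_nonneg_right hA hB0)
          (mul_le_mul_of_nonneg_right (mul_le_mul_of_nonneg_right h4 hA0.le) hB0)
    _ = 5 * a ^ (1 / p - s) * b ^ (1 / p) := by ring
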